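/- Let H ∈ S^{2,0} ⊗ W satisfy the Bochner-flat condition. If m < 2n − 1, then the rank k of H is at most 1, i.e., the asymptotic subspace {v ∈ C^n : H(v,v) = 0} has complex codimension at most 1. -/

import Mathlib

open Finset Complex

noncomputable def Qf {n m : ℕ} (H : Fin m → Fin n → Fin n → ℂ) (α : Fin m) (z : Fin n → ℂ) : ℂ :=
  ∑ i, ∑ j, H α i j * z i * z j
noncomputable def Bf {n m : ℕ} (H : Fin m → Fin n → Fin n → ℂ) (α : Fin m) (x y : Fin n → ℂ) : ℂ :=
  ∑ i, ∑ j, H α i j * (x i * y j + y i * x j)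
noncomputable def Nf {n : ℕ} (z w : Fin n → ℂ) : ℂ := ∑ k, z k * (starRingEnd ℂ) (w k)
noncomputable def Pf {n : ℕ} (h : Fin n → Fin n → ℂ) (z w : Fin n → ℂ) : ℂ :=
  ∑ i, ∑ j, h i j * z i * (starRingEnd ℂ) (w j)

lemma Qexp {n m : ℕ} (H : Fin m → Fin n → Fin n → ℂ) (α : Fin m) (z w : Fin n → ℂ) (t : ℂ) :
    Qf H α (fun i => z i + t * w i) = Qf H α z + t * Bf H α z w + t ^ 2 * Qf H α w := by
  unfold Qf Bf
  simp only [Finset.mul_sum, ← Finset.sum_add_distrib]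
  exact Finset.sum_congr rfl fun i _ => Finset.sum_congr rfl fun j _ => by ring

lemma Nexp {n : ℕ} (z w : Fin n → ℂ) (t : ℂ) :
    Nf (fun i => z i + t * w i) (fun i => z i + t * w i)
      = Nf z z + t * Nf w z + (starRingEnd ℂ) t * Nf z w
        + t * (starRingEnd ℂ) t * Nf w w := by
  unfold Nf
  simp only [Finset.mul_sum, ← Finset.sum_add_distrib, map_add, map_mul]
  exact Finset.sum_congr rfl fun i _ => by ring

lemma Pexp {n : ℕ} (h : Fin n → Fin n → ℂ) (z w : Fin n → ℂ) (t : ℂ) :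
    Pf h (fun i => z i + t * w i) (fun i => z i + t * w i)
      = Pf h z z + t * Pf h w z + (starRingEnd ℂ) t * Pf h z w
        + t * (starRingEnd ℂ) t * Pf h w w := by
  unfold Pf
  simp only [Finset.mul_sum, ← Finset.sum_add_distrib, map_add, map_mul]
  exact Finset.sum_congr rfl fun i _ => Finset.sum_congr rfl fun j _ => by ring

lemma sum9 {m : ℕ} (a b c : Fin m → ℂ) (t s : ℂ) :
    ∑ α, (a α + t * b α + t ^ 2 * c α)
        * ((starRingEnd ℂ) (a α) + s * (starRingEnd ℂ) (b α) + s ^ 2 * (starRingEnd ℂ) (c α))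
      = (∑ α, a α * (starRingEnd ℂ) (a α)) + t * (∑ α, b α * (starRingEnd ℂ) (a α))
        + t ^ 2 * (∑ α, c α * (starRingEnd ℂ) (a α))
        + s * (∑ α, a α * (starRingEnd ℂ) (b α)) + t * s * (∑ α, b α * (starRingEnd ℂ) (b α))
        + t ^ 2 * s * (∑ α, c α * (starRingEnd ℂ) (b α))
        + s ^ 2 * (∑ α, a α * (starRingEnd ℂ) (c α))
        + t * s ^ 2 * (∑ α, b α * (starRingEnd ℂ) (c α))
        + t ^ 2 * s ^ 2 * (∑ α, c α * (starRingEnd ℂ) (c α)) := by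
  simp only [Finset.mul_sum, ← Finset.sum_add_distrib]
  exact Finset.sum_congr rfl fun α _ => by ring

lemma extract9 (x00 x10 x20 x01 x11 x21 x02 x12 x22 : ℂ)
    (h : ∀ t s : ℂ, s = (starRingEnd ℂ) t →
      x00 + t*x10 + t^2*x20 + s*x01 + t*s*x11 + t^2*s*x21 + s^2*x02 + t*s^2*x12 + t^2*s^2*x22 = 0) :
    x20 = 0 := by
  have e0 := h 0 0 (by simp [Complex.ext_iff])
  have e1 := h 1 1 (by simp [Complex.ext_iff])
  have e2 := h (-1) (-1) (by simp [Complex.ext_iff])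
  have e3 := h 2 2 (by simp [Complex.ext_iff])
  have e4 := h (-2) (-2) (by simp [Complex.ext_iff])
  have e5 := h I (-I) (by simp [Complex.ext_iff])
  have e6 := h (-I) I (by simp [Complex.ext_iff])
  have e7 := h (2*I) (-(2*I)) (by simp [Complex.ext_iff])
  have e8 := h (-(2*I)) (2*I) (by simp [Complex.ext_iff])
  have e9 := h (1+I) (1-I) (by simp [Complex.ext_iff])
  have e10 := h (-1-I) (-1+I) (by simp [Complex.ext_iff])
  have e11 := h (2+2*I) (2-2*I) (by simp [Complex.ext_iff])
  have e12 := h (-2-2*I) (-2+2*I) (by simp [Complex.ext_iff])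
  linear_combination (-(5/16)*I) * e0
    + (1/6 + I/6) * e1 + (1/6 + I/6) * e2
    + (-(1/96) - I/96) * e3 + (-(1/96) - I/96) * e4
    + (-(1/6) + I/6) * e5 + (-(1/6) + I/6) * e6
    + (1/96 - I/96) * e7 + (1/96 - I/96) * e8
    + (-(1/6)*I) * e9 + (-(1/6)*I) * e10
    + ((1/96)*I) * e11 + ((1/96)*I) * e12
    + ((3/4)*x20 - (1/4)*x11 - (1/4)*x02) * Complex.I_sq

lemma L1 {n m : ℕ} (H : Fin m → Fin n → Fin n → ℂ) (h : Fin n → Fin n → ℂ)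
    (hflat : ∀ z : Fin n → ℂ,
      ∑ α, Qf H α z * (starRingEnd ℂ) (Qf H α z) = Nf z z * Pf h z z)
    (z w : Fin n → ℂ) :
    ∑ α, Qf H α w * (starRingEnd ℂ) (Qf H α z) = Nf w z * Pf h w z := by
  have key := extract9
    ((∑ α, Qf H α z * (starRingEnd ℂ) (Qf H α z)) - Nf z z * Pf h z z)
    ((∑ α, Bf H α z w * (starRingEnd ℂ) (Qf H α z)) - (Nf w z * Pf h z z + Nf z z * Pf h w z))
    ((∑ α, Qf H α w * (starRingEnd ℂ) (Qf H α z)) - Nf w z * Pf h w z)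
    ((∑ α, Qf H α z * (starRingEnd ℂ) (Bf H α z w)) - (Nf z w * Pf h z z + Nf z z * Pf h z w))
    ((∑ α, Bf H α z w * (starRingEnd ℂ) (Bf H α z w))
      - (Nf z z * Pf h w w + Nf w w * Pf h z z + Nf w z * Pf h z w + Nf z w * Pf h w z))
    ((∑ α, Qf H α w * (starRingEnd ℂ) (Bf H α z w)) - (Nf w z * Pf h w w + Nf w w * Pf h w z))
    ((∑ α, Qf H α z * (starRingEnd ℂ) (Qf H α w)) - Nf z w * Pf h z w)
    ((∑ α, Bf H α z w * (starRingEnd ℂ) (Qf H α w)) - (Nf z w * Pf h w w + Nf w w * Pf h z w))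
    ((∑ α, Qf H α w * (starRingEnd ℂ) (Qf H α w)) - Nf w w * Pf h w w)
    ?_
  · linear_combination key
  · intro t s hs
    subst hs
    have E := hflat (fun i => z i + t * w i)
    rw [Nexp, Pexp] at E
    simp only [Qexp, map_add, map_mul, map_pow] at E
    rw [sum9] at E
    linear_combination E

-- additivity

lemma Qadd {n m : ℕ} (H : Fin m → Fin n → Fin n → ℂ) (α : Fin m) (x y : Fin n → ℂ) :
    Qf H α (fun i => x i + y i) = Qf H α x + Bf H α x y + Qf H α y := by
  unfold Qf Bf
  simp only [← Finset.sum_add_distrib]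
  exact Finset.sum_congr rfl fun i _ => Finset.sum_congr rfl fun j _ => by ring

lemma Nf_addl {n : ℕ} (x y w : Fin n → ℂ) :
    Nf (fun i => x i + y i) w = Nf x w + Nf y w := by
  unfold Nf
  simp only [← Finset.sum_add_distrib]
  exact Finset.sum_congr rfl fun i _ => by ring

lemma Nf_addr {n : ℕ} (x u v : Fin n → ℂ) :
    Nf x (fun i => u i + v i) = Nf x u + Nf x v := by
  unfold Nf
  simp only [← Finset.sum_add_distrib, map_add]
  exact Finset.sum_congr rfl fun i _ => by ring

lemma Pf_addl {n : ℕ} (h : Fin n → Fin n → ℂ) (x y w : Fin n → ℂ) :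
    Pf h (fun i => x i + y i) w = Pf h x w + Pf h y w := by
  unfold Pf
  simp only [← Finset.sum_add_distrib]
  exact Finset.sum_congr rfl fun i _ => Finset.sum_congr rfl fun j _ => by ring

lemma Pf_addr {n : ℕ} (h : Fin n → Fin n → ℂ) (x u v : Fin n → ℂ) :
    Pf h x (fun i => u i + v i) = Pf h x u + Pf h x v := by
  unfold Pf
  simp only [← Finset.sum_add_distrib, map_add]
  exact Finset.sum_congr rfl fun i _ => Finset.sum_congr rfl fun j _ => by ring


lemma L2 {n m : ℕ} (H : Fin m → Fin n → Fin n → ℂ) (h : Fin n → Fin n → ℂ)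
    (hflat : ∀ z : Fin n → ℂ,
      ∑ α, Qf H α z * (starRingEnd ℂ) (Qf H α z) = Nf z z * Pf h z z)
    (x y w : Fin n → ℂ) :
    ∑ α, Bf H α x y * (starRingEnd ℂ) (Qf H α w)
      = Nf x w * Pf h y w + Nf y w * Pf h x w := by
  have A := L1 H h hflat w (fun i => x i + y i)
  rw [Nf_addl, Pf_addl] at A
  simp only [Qadd, add_mul, Finset.sum_add_distrib] at A
  have Ax := L1 H h hflat w x
  have Ay := L1 H h hflat w y
  linear_combination A - Ax - Ay

lemma L3 {n m : ℕ} (H : Fin m → Fin n → Fin n → ℂ) (h : Fin n → Fin n → ℂ)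
    (hflat : ∀ z : Fin n → ℂ,
      ∑ α, Qf H α z * (starRingEnd ℂ) (Qf H α z) = Nf z z * Pf h z z)
    (x y u v : Fin n → ℂ) :
    ∑ α, Bf H α x y * (starRingEnd ℂ) (Bf H α u v)
      = Nf x u * Pf h y v + Nf x v * Pf h y u + Nf y u * Pf h x v + Nf y v * Pf h x u := by
  have A := L2 H h hflat x y (fun i => u i + v i)
  rw [Nf_addr, Nf_addr, Pf_addr, Pf_addr] at A
  simp only [Qadd, map_add, mul_add, Finset.sum_add_distrib] at A
  have Au := L2 H h hflat x y u
  have Av := L2 H h hflat x y v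
  linear_combination A - Au - Av

lemma Nf_diag_real {n : ℕ} (z : Fin n → ℂ) :
    Nf z z = ((∑ k, Complex.normSq (z k) : ℝ) : ℂ) := by
  unfold Nf
  push_cast
  exact Finset.sum_congr rfl fun k _ => (Complex.mul_conj (z k))

lemma sum_mul_conj_real {m : ℕ} (f : Fin m → ℂ) :
    ∑ α, f α * (starRingEnd ℂ) (f α) = ((∑ α, Complex.normSq (f α) : ℝ) : ℂ) := by
  push_cast
  exact Finset.sum_congr rfl fun k _ => (Complex.mul_conj (f k))

lemma Pf_zerol {n : ℕ} (h : Fin n → Fin n → ℂ) (w : Fin n → ℂ) :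
    Pf h (fun _ => 0) w = 0 := by
  unfold Pf
  simp

-- Pf of the diagonal is a nonnegative real
lemma Pdiag {n m : ℕ} (H : Fin m → Fin n → Fin n → ℂ) (h : Fin n → Fin n → ℂ)
    (hflat : ∀ z : Fin n → ℂ,
      ∑ α, Qf H α z * (starRingEnd ℂ) (Qf H α z) = Nf z z * Pf h z z)
    (z : Fin n → ℂ) : ∃ r : ℝ, 0 ≤ r ∧ Pf h z z = (r : ℂ) := by
  have E := hflat z
  rw [Nf_diag_real, sum_mul_conj_real] at E
  set A : ℝ := ∑ k, Complex.normSq (z k) with hA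
  set B : ℝ := ∑ α, Complex.normSq (Qf H α z) with hB
  have hBnn : 0 ≤ B := Finset.sum_nonneg fun α _ => Complex.normSq_nonneg _
  by_cases hA0 : A = 0
  · -- then z = 0
    have hz : ∀ k, z k = 0 := by
      intro k
      have := (Finset.sum_eq_zero_iff_of_nonneg
        (fun k _ => Complex.normSq_nonneg (z k))).mp hA0 k (Finset.mem_univ k)
      exact Complex.normSq_eq_zero.mp this
    have hzf : z = fun _ => 0 := funext hz
    refine ⟨0, le_refl _, ?_⟩
    rw [hzf, Pf_zerol]
    simp
  · have hAp : 0 < A := lt_of_le_of_ne (Finset.sum_nonneg fun k _ => Complex.normSq_nonneg _)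
      (Ne.symm hA0)
    refine ⟨B / A, div_nonneg hBnn hAp.le, ?_⟩
    have hAc : (A : ℂ) ≠ 0 := by exact_mod_cast hA0
    rw [Complex.ofReal_div, eq_div_iff hAc]
    linear_combination -E

-- swap-conjugation identity from L1
lemma Psym {n m : ℕ} (H : Fin m → Fin n → Fin n → ℂ) (h : Fin n → Fin n → ℂ)
    (hflat : ∀ z : Fin n → ℂ,
      ∑ α, Qf H α z * (starRingEnd ℂ) (Qf H α z) = Nf z z * Pf h z z)
    (z w : Fin n → ℂ) :
    Nf w z * Pf h w z = Nf w z * (starRingEnd ℂ) (Pf h z w) := by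
  have A := L1 H h hflat z w
  have B := congrArg (starRingEnd ℂ) (L1 H h hflat w z)
  rw [map_mul, map_sum] at B
  simp only [map_mul, Complex.conj_conj] at B
  have hNc : (starRingEnd ℂ) (Nf z w) = Nf w z := by
    unfold Nf
    rw [map_sum]
    simp only [map_mul, Complex.conj_conj]
    exact Finset.sum_congr rfl fun k _ => by ring
  rw [hNc] at B
  rw [A.symm]
  rw [← B]
  exact Finset.sum_congr rfl fun α _ => by ring

lemma Nsingle {n : ℕ} (k l : Fin n) :
    Nf (Pi.single k (1:ℂ)) (Pi.single l (1:ℂ)) = if k = l then 1 else 0 := by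
  unfold Nf
  simp [Pi.single_apply, apply_ite (starRingEnd ℂ), Finset.sum_ite_eq, eq_comm]

lemma Psingle {n : ℕ} (h : Fin n → Fin n → ℂ) (k l : Fin n) :
    Pf h (Pi.single k (1:ℂ)) (Pi.single l (1:ℂ)) = h k l := by
  unfold Pf
  simp [Pi.single_apply, apply_ite (starRingEnd ℂ), mul_ite, ite_mul,
    Finset.sum_ite_eq, eq_comm]

lemma herm {n m : ℕ} (H : Fin m → Fin n → Fin n → ℂ) (h : Fin n → Fin n → ℂ)
    (hflat : ∀ z : Fin n → ℂ,
      ∑ α, Qf H α z * (starRingEnd ℂ) (Qf H α z) = Nf z z * Pf h z z)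
    (k l : Fin n) : (starRingEnd ℂ) (h k l) = h l k := by
  have d : ∀ l : Fin n, (starRingEnd ℂ) (h l l) = h l l := by
    intro l
    have := Psym H h hflat (Pi.single l 1) (Pi.single l 1)
    rw [Nsingle, Psingle] at this
    have h1 : (if l = l then (1:ℂ) else 0) = 1 := if_pos rfl
    rw [h1, one_mul, one_mul] at this
    exact this.symm
  have key := Psym H h hflat (Pi.single l 1)
    (fun i => (Pi.single k 1 : Fin n → ℂ) i + (Pi.single l 1 : Fin n → ℂ) i)
  rw [Nf_addl, Pf_addl, Pf_addr, map_add] at key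
  simp only [Nsingle, Psingle] at key
  rw [if_true] at key
  have cancel : ((if k = l then (1:ℂ) else 0) + 1) ≠ 0 := by
    by_cases hkl : k = l <;> simp [hkl]
  have key2 : h k l + h l l = (starRingEnd ℂ) (h l k) + (starRingEnd ℂ) (h l l) :=
    mul_left_cancel₀ cancel key
  rw [d l] at key2
  have : h k l = (starRingEnd ℂ) (h l k) := by linear_combination key2
  rw [this, Complex.conj_conj]

lemma Pconj {n : ℕ} (h : Fin n → Fin n → ℂ)
    (hh : ∀ k l, (starRingEnd ℂ) (h k l) = h l k)
    (z w : Fin n → ℂ) : (starRingEnd ℂ) (Pf h z w) = Pf h w z := by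
  have : (starRingEnd ℂ) (Pf h z w) = ∑ i, ∑ j, h j i * w j * (starRingEnd ℂ) (z i) := by
    rw [Pf, map_sum]
    refine Finset.sum_congr rfl fun i _ => ?_
    rw [map_sum]
    refine Finset.sum_congr rfl fun j _ => ?_
    rw [map_mul, map_mul, Complex.conj_conj, hh]
    ring
  rw [this, Pf]
  exact Finset.sum_comm

lemma PzwZero {n m : ℕ} (H : Fin m → Fin n → Fin n → ℂ) (h : Fin n → Fin n → ℂ)
    (hflat : ∀ z : Fin n → ℂ,
      ∑ α, Qf H α z * (starRingEnd ℂ) (Qf H α z) = Nf z z * Pf h z z)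
    (z : Fin n → ℂ) (hz : Pf h z z = 0) (w : Fin n → ℂ) : Pf h z w = 0 := by
  by_contra ha
  set a : ℂ := Pf h z w with haa
  have hna : 0 < Complex.normSq a := Complex.normSq_pos.mpr ha
  obtain ⟨rw', hrw', hPww⟩ := Pdiag H h hflat w
  set s : ℝ := (rw' + 1) / (2 * Complex.normSq a) with hs
  set t : ℂ := -(s : ℂ) * (starRingEnd ℂ) a with ht
  have hexp := Pexp h w z t
  have hwz : Pf h w z = (starRingEnd ℂ) a := by
    rw [haa, Pconj h (herm H h hflat) z w]
  have hta : t * a = ((-(s * Complex.normSq a) : ℝ) : ℂ) := by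
    rw [ht]
    push_cast
    have : (starRingEnd ℂ) a * a = (Complex.normSq a : ℂ) := by
      rw [mul_comm]; exact Complex.mul_conj a
    linear_combination -(s:ℂ) * this
  have hval : Pf h (fun i => w i + t * z i) (fun i => w i + t * z i)
      = ((rw' - 2 * (s * Complex.normSq a) : ℝ) : ℂ) := by
    rw [hexp, hz, hPww, hwz]
    have h2 : (starRingEnd ℂ) t * (starRingEnd ℂ) a = (starRingEnd ℂ) (t * a) := (map_mul _ _ _).symm
    rw [h2, hta]
    rw [Complex.conj_ofReal]
    push_cast
    ring
  have hsval : s * Complex.normSq a = (rw' + 1) / 2 := by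
    rw [hs]
    field_simp
  obtain ⟨r, hr, hPv⟩ := Pdiag H h hflat (fun i => w i + t * z i)
  rw [hPv] at hval
  have : r = rw' - 2 * (s * Complex.normSq a) := by exact_mod_cast hval
  rw [hsval] at this
  linarith

lemma Pf_smull {n : ℕ} (h : Fin n → Fin n → ℂ) (c : ℂ) (v w : Fin n → ℂ) :
    Pf h (c • v) w = c * Pf h v w := by
  unfold Pf
  simp only [Finset.mul_sum]
  exact Finset.sum_congr rfl fun i _ => Finset.sum_congr rfl fun j _ => by
    simp only [Pi.smul_apply, smul_eq_mul]; ring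

noncomputable def Smod {n : ℕ} (h : Fin n → Fin n → ℂ) : Submodule ℂ (Fin n → ℂ) where
  carrier := {v | ∀ w, Pf h v w = 0}
  add_mem' := by
    intro a b ha hb w
    have hab : (a + b : Fin n → ℂ) = fun i => a i + b i := rfl
    rw [hab, Pf_addl, ha w, hb w, add_zero]
  zero_mem' := by
    intro w
    have h0 : (0 : Fin n → ℂ) = fun _ => 0 := rfl
    rw [h0, Pf_zerol]
  smul_mem' := by
    intro c a ha w
    rw [Pf_smull, ha w, mul_zero]

lemma SmodEq {n m : ℕ} (H : Fin m → Fin n → Fin n → ℂ) (h : Fin n → Fin n → ℂ)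
    (hflat : ∀ z : Fin n → ℂ,
      ∑ α, Qf H α z * (starRingEnd ℂ) (Qf H α z) = Nf z z * Pf h z z) :
    (Smod h : Set (Fin n → ℂ)) = {v | ∀ α, Qf H α v = 0} := by
  ext v
  constructor
  · intro hv α
    have hv' : ∀ w, Pf h v w = 0 := hv
    have E := hflat v
    rw [hv' v, mul_zero, sum_mul_conj_real] at E
    have E' : (∑ β, Complex.normSq (Qf H β v)) = 0 := by exact_mod_cast E
    have := (Finset.sum_eq_zero_iff_of_nonneg
      (fun β _ => Complex.normSq_nonneg (Qf H β v))).mp E' α (Finset.mem_univ α)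
    exact Complex.normSq_eq_zero.mp this
  · intro hv
    have hvv : Pf h v v = 0 := by
      have E := hflat v
      have hz : ∀ α : Fin m, Qf H α v * (starRingEnd ℂ) (Qf H α v) = 0 := by
        intro α; rw [hv α]; simp
      rw [Finset.sum_congr rfl (fun α _ => hz α), Finset.sum_const, smul_zero] at E
      rw [Nf_diag_real] at E
      rcases eq_or_ne (∑ k, Complex.normSq (v k)) 0 with hA | hA
      · have hv0 : v = fun _ => 0 := funext fun k => Complex.normSq_eq_zero.mp
          ((Finset.sum_eq_zero_iff_of_nonneg (fun k _ => Complex.normSq_nonneg (v k))).mp hA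
            k (Finset.mem_univ k))
        rw [hv0, Pf_zerol]
      · have hAc : ((∑ k, Complex.normSq (v k) : ℝ) : ℂ) ≠ 0 := by exact_mod_cast hA
        rcases mul_eq_zero.mp E.symm with h1 | h1
        · exact absurd h1 hAc
        · exact h1
    intro w
    exact PzwZero H h hflat v hvv w

open Matrix in
lemma PfA {n : ℕ} (h : Fin n → Fin n → ℂ) (x y : Fin n → ℂ) :
    Pf h x y = Nf ((Matrix.of fun l k => h k l) *ᵥ x) y := by
  unfold Pf Nf
  rw [Finset.sum_comm]
  refine Finset.sum_congr rfl fun j _ => ?_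
  simp only [Matrix.mulVec, dotProduct, Matrix.of_apply, Finset.sum_mul]

lemma Nf_rsmul {n : ℕ} (r : ℝ) (x y : Fin n → ℂ) :
    Nf (r • x) y = (r : ℂ) * Nf x y := by
  unfold Nf
  rw [Finset.mul_sum]
  refine Finset.sum_congr rfl fun k _ => ?_
  simp only [Pi.smul_apply, Complex.real_smul]
  ring

lemma indep_of_orthogonal {N : ℕ} {ι : Type*} [Fintype ι] (V : ι → (Fin N → ℂ))
    (horth : ∀ a b, a ≠ b → (∑ k, V a k * (starRingEnd ℂ) (V b k)) = 0)
    (hnz : ∀ a, (∑ k, V a k * (starRingEnd ℂ) (V a k)) ≠ 0) : LinearIndependent ℂ V := by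
  rw [Fintype.linearIndependent_iff]
  intro g hg b
  have key : ∑ k, (∑ a, g a • V a) k * (starRingEnd ℂ) (V b k) = 0 := by
    rw [hg]; simp
  simp only [Finset.sum_apply, Pi.smul_apply, smul_eq_mul, Finset.sum_mul] at key
  rw [Finset.sum_comm] at key
  have key2 : ∑ a, g a * (∑ k, V a k * (starRingEnd ℂ) (V b k)) = 0 := by
    rw [← key]
    exact Finset.sum_congr rfl fun a _ => by
      rw [Finset.mul_sum]
      exact Finset.sum_congr rfl fun k _ => by ring
  rw [Finset.sum_eq_single b (fun a _ ha => by rw [horth a b ha, mul_zero])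
    (fun hb => absurd (Finset.mem_univ b) hb)] at key2
  exact (mul_eq_zero.mp key2).resolve_right (hnz b)

open Matrix in
/-- If `H` is Bochner-flat and `m < 2n − 1`, then the rank of `H` is at most `1`:
the asymptotic subspace `{v : H(v,v) = 0}` has complex codimension at most `1`. -/
theorem bochner_flat_rank_le_one (n m : ℕ) (hm : m < 2 * n - 1)
    (H : Fin m → Fin n → Fin n → ℂ)
    (hsym : ∀ α i j, H α i j = H α j i)
    (hflat : ∃ h : Fin n → Fin n → ℂ, ∀ z : Fin n → ℂ,
      ∑ α, (∑ i, ∑ j, H α i j * z i * z j)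
          * (starRingEnd ℂ) (∑ k, ∑ l, H α k l * z k * z l)
        = (∑ k, z k * (starRingEnd ℂ) (z k))
          * (∑ i, ∑ j, h i j * z i * (starRingEnd ℂ) (z j))) :
    ∃ S : Submodule ℂ (Fin n → ℂ),
      (S : Set (Fin n → ℂ)) = {v | ∀ α, ∑ i, ∑ j, H α i j * v i * v j = 0} ∧
      Module.finrank ℂ S + 1 ≥ n := by
  obtain ⟨h, hflat0⟩ := hflat
  have hflat' : ∀ z : Fin n → ℂ,
      ∑ α, Qf H α z * (starRingEnd ℂ) (Qf H α z) = Nf z z * Pf h z z := hflat0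
  refine ⟨Smod h, ?_, ?_⟩
  · exact SmodEq H h hflat'
  · -- rank bound
    have hA : (Matrix.of fun l k => h k l : Matrix (Fin n) (Fin n) ℂ).IsHermitian := by
      apply Matrix.IsHermitian.ext
      intro i j
      simp only [Matrix.conjTranspose_apply, Matrix.of_apply, RCLike.star_def]
      exact herm H h hflat' i j
    set lam : Fin n → ℝ := hA.eigenvalues with hlam
    set ef : Fin n → (Fin n → ℂ) := fun i => ⇑(hA.eigenvectorBasis i) with hef
    have hev : ∀ j, (Matrix.of fun l k => h k l : Matrix (Fin n) (Fin n) ℂ) *ᵥ ef j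
        = lam j • ef j := fun j => hA.mulVec_eigenvectorBasis j
    have northo : ∀ i j, (∑ k, (starRingEnd ℂ) (ef i k) * ef j k)
        = if i = j then 1 else 0 := by
      intro i j
      have o := orthonormal_iff_ite.mp hA.eigenvectorBasis.orthonormal i j
      rw [← o, PiLp.inner_apply]
      simp only [RCLike.inner_apply']
      rfl
    have nfo : ∀ i j, Nf (ef i) (ef j) = if i = j then 1 else 0 := by
      intro i j
      have c := congrArg (starRingEnd ℂ) (northo i j)
      rw [map_sum] at c
      simp only [_root_.map_mul, Complex.conj_conj] at c
      rw [Nf, c]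
      by_cases hij : i = j <;> simp [hij]
    have pee : ∀ i j, Pf h (ef i) (ef j) = ((lam i : ℝ) : ℂ) * (if i = j then 1 else 0) := by
      intro i j
      rw [PfA, hev i, Nf_rsmul, nfo]
    have lamnn : ∀ i, 0 ≤ lam i := by
      intro i
      obtain ⟨r, hr, heq⟩ := Pdiag H h hflat' (ef i)
      rw [pee i i, if_pos rfl, mul_one] at heq
      have : lam i = r := by exact_mod_cast heq
      rw [this]; exact hr
    by_cases hpos : ∃ i j : Fin n, i ≠ j ∧ 0 < lam i ∧ 0 < lam j
    · exfalso
      obtain ⟨i1, i2, h12, hp1, hp2⟩ := hpos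
      have gval : ∀ p q r s : Fin n,
          ∑ α, Bf H α (ef p) (ef q) * (starRingEnd ℂ) (Bf H α (ef r) (ef s))
            = (if p = r then 1 else 0) * (((lam q : ℝ) : ℂ) * (if q = s then 1 else 0))
              + (if p = s then 1 else 0) * (((lam q : ℝ) : ℂ) * (if q = r then 1 else 0))
              + (if q = r then 1 else 0) * (((lam p : ℝ) : ℂ) * (if p = s then 1 else 0))
              + (if q = s then 1 else 0) * (((lam p : ℝ) : ℂ) * (if p = r then 1 else 0)) := by
        intro p q r s
        rw [L3 H h hflat', nfo, nfo, nfo, nfo, pee, pee, pee, pee]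
      set V : (Fin n ⊕ {j : Fin n // j ≠ i1}) → (Fin m → ℂ) :=
        Sum.elim (fun j => fun α => Bf H α (ef i1) (ef j))
          (fun j => fun α => Bf H α (ef i2) (ef j.1)) with hV
      have horth : ∀ a b, a ≠ b → (∑ k, V a k * (starRingEnd ℂ) (V b k)) = 0 := by
        intro a b hab
        rcases a with j | ⟨j, hj⟩ <;> rcases b with j' | ⟨j', hj'⟩ <;>
          simp only [hV, Sum.elim_inl, Sum.elim_inr] <;> rw [gval]
        · -- (i1,j) vs (i1,j'), j ≠ j'
          have hjj' : j ≠ j' := fun e => hab (by rw [e])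
          by_cases h1 : j = i1 <;> by_cases h2 : i1 = j'
          · exact absurd (h1.trans h2) hjj'
          · simp [h1, h2, hjj']
          · simp [h1, h2, hjj']
          · simp [h1, h2, hjj']
        · -- (i1,j) vs (i2,j'), j' ≠ i1
          have e1 : i1 ≠ i2 := h12
          have e2 : i1 ≠ j' := fun e => hj' e.symm
          by_cases h3 : j = i2 <;> simp [e1, e2, h3]
        · -- (i2,j) vs (i1,j'), j ≠ i1
          have e1 : i2 ≠ i1 := fun e => h12 e.symm
          simp [e1, hj]
        · -- (i2,j) vs (i2,j'), j ≠ j'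
          have hjj' : j ≠ j' := fun e => hab (by subst e; rfl)
          by_cases h1 : j = i2 <;> by_cases h2 : i2 = j'
          · exact absurd (h1.trans h2) hjj'
          · simp [h1, h2, hjj']
          · simp [h1, h2, hjj']
          · simp [h1, h2, hjj']
      have hnz : ∀ a, (∑ k, V a k * (starRingEnd ℂ) (V a k)) ≠ 0 := by
        intro a
        rcases a with j | ⟨j, hj⟩ <;>
          simp only [hV, Sum.elim_inl, Sum.elim_inr] <;> rw [gval]
        · by_cases h1 : j = i1
          · subst h1
            have : ((1:ℂ)) * (((lam j : ℝ):ℂ) * 1) + 1 * (((lam j : ℝ):ℂ) * 1)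
                + 1 * (((lam j : ℝ):ℂ) * 1) + 1 * (((lam j : ℝ):ℂ) * 1)
                = (((4 * lam j : ℝ)) : ℂ) := by push_cast; ring
            simp only [eq_self_iff_true, if_true]
            rw [this]
            exact Complex.ofReal_ne_zero.mpr (by positivity)
          · have h2 : i1 ≠ j := fun e => h1 e.symm
            simp only [eq_self_iff_true, if_true, if_neg h1, if_neg h2]
            have : ((1:ℂ)) * (((lam j : ℝ):ℂ) * 1) + 0 * (((lam j : ℝ):ℂ) * 0)
                + 0 * (((lam i1 : ℝ):ℂ) * 0) + 1 * (((lam i1 : ℝ):ℂ) * 1)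
                = (((lam j + lam i1 : ℝ)) : ℂ) := by push_cast; ring
            rw [this]
            have := lamnn j
            exact Complex.ofReal_ne_zero.mpr (by positivity)
        · by_cases h1 : j = i2
          · subst h1
            have : ((1:ℂ)) * (((lam j : ℝ):ℂ) * 1) + 1 * (((lam j : ℝ):ℂ) * 1)
                + 1 * (((lam j : ℝ):ℂ) * 1) + 1 * (((lam j : ℝ):ℂ) * 1)
                = (((4 * lam j : ℝ)) : ℂ) := by push_cast; ring
            simp only [eq_self_iff_true, if_true]
            rw [this]
            exact Complex.ofReal_ne_zero.mpr (by positivity)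
          · have h2 : i2 ≠ j := fun e => h1 e.symm
            simp only [eq_self_iff_true, if_true, if_neg h1, if_neg h2]
            have : ((1:ℂ)) * (((lam j : ℝ):ℂ) * 1) + 0 * (((lam j : ℝ):ℂ) * 0)
                + 0 * (((lam i2 : ℝ):ℂ) * 0) + 1 * (((lam i2 : ℝ):ℂ) * 1)
                = (((lam j + lam i2 : ℝ)) : ℂ) := by push_cast; ring
            rw [this]
            have := lamnn j
            exact Complex.ofReal_ne_zero.mpr (by positivity)
      have li := indep_of_orthogonal V horth hnz
      have hc := li.fintype_card_le_finrank
      rw [Module.finrank_fin_fun] at hc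
      have hcard : Fintype.card (Fin n ⊕ {j : Fin n // j ≠ i1}) = n + (n - 1) := by
        rw [Fintype.card_sum, Fintype.card_fin, Fintype.card_subtype_compl,
          Fintype.card_subtype_eq, Fintype.card_fin]
      rw [hcard] at hc
      have hn : 0 < n := i1.pos
      omega
    · -- at most one positive eigenvalue
      push_neg at hpos
      have memS : ∀ i : Fin n, lam i = 0 → ef i ∈ Smod h := by
        intro i hi w
        refine PzwZero H h hflat' (ef i) ?_ w
        rw [pee i i, if_pos rfl, mul_one, hi]
        simp
      set fam : {i : Fin n // lam i = 0} → (Fin n → ℂ) := fun i => ef i.1 with hfam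
      have orth : ∀ a b : {i : Fin n // lam i = 0}, a ≠ b →
          (∑ k, fam a k * (starRingEnd ℂ) (fam b k)) = 0 := by
        intro a b hab
        have : Nf (ef a.1) (ef b.1) = 0 := by
          rw [nfo, if_neg (fun e => hab (Subtype.ext e))]
        exact this
      have nz : ∀ a : {i : Fin n // lam i = 0},
          (∑ k, fam a k * (starRingEnd ℂ) (fam a k)) ≠ 0 := by
        intro a
        have : Nf (ef a.1) (ef a.1) = 1 := by rw [nfo, if_pos rfl]
        rw [show (∑ k, fam a k * (starRingEnd ℂ) (fam a k)) = Nf (ef a.1) (ef a.1) from rfl, this]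
        exact one_ne_zero
      have lifam := indep_of_orthogonal fam orth nz
      have li' : LinearIndependent ℂ
          (fun i : {i : Fin n // lam i = 0} => (⟨ef i.1, memS i.1 i.2⟩ : Smod h)) :=
        LinearIndependent.of_comp (Smod h).subtype lifam
      have hc := li'.fintype_card_le_finrank
      have hcz : Fintype.card {i : Fin n // lam i = 0}
          = (Finset.univ.filter fun i => lam i = 0).card := Fintype.card_subtype _
      have hsplit := Finset.card_filter_add_card_filter_not
        (s := (Finset.univ : Finset (Fin n))) (p := fun i => lam i = 0)
      have hone : (Finset.univ.filter fun i => ¬ lam i = 0).card ≤ 1 := by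
        refine Finset.card_le_one.mpr ?_
        intro a ha b hb
        have ha' : 0 < lam a :=
          lt_of_le_of_ne (lamnn a) (Ne.symm (Finset.mem_filter.mp ha).2)
        have hb' : 0 < lam b :=
          lt_of_le_of_ne (lamnn b) (Ne.symm (Finset.mem_filter.mp hb).2)
        by_contra hne
        exact absurd hb' (not_lt.mpr (hpos a b hne ha'))
      rw [Finset.card_univ, Fintype.card_fin] at hsplit
      rw [hcz] at hc
      omega
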